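/- Let H be a complex Hilbert space and let D, τ be bounded self-adjoint operators on H with τ² = 1 and Dτ + τD = 0. Set g(x) = x/√(1+x²), h(x) = 1/√(1+x²), and G := g(D) − τ h(D). Then G τ + τ G = −2 h(D), and (G − τ)² = 2(1 + h(D)). Since h(D) ≥ 0, one has (G − τ)² ≥ 2·1, and in particular G − τ is invertible. -/

import Mathlib

noncomputable def conjSAH {A : Type*} [NormedRing A] [StarRing A] [NormedAlgebra ℂ A]
    (τ : A) (hτ : IsSelfAdjoint τ) (hτ2 : τ * τ = 1) : A →⋆ₐ[ℂ] A where
  toFun a := τ * a * τ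
  map_one' := by show τ * 1 * τ = 1; rw [mul_one, hτ2]
  map_mul' a b := by
    simp only [mul_assoc]
    rw [← mul_assoc τ τ (b * τ), hτ2, one_mul]
  map_zero' := by simp
  map_add' a b := by noncomm_ring
  commutes' r := by
    simp [Algebra.algebraMap_eq_smul_one, mul_smul_comm, smul_mul_assoc, hτ2]
  map_star' a := by
    simp [star_mul, hτ.star_eq, mul_assoc]

lemma conj_cfc {H : Type*} [NormedAddCommGroup H] [InnerProductSpace ℂ H] [CompleteSpace H]
    (D τ : H →L[ℂ] H) (hD : IsSelfAdjoint D) (hτ : IsSelfAdjoint τ)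
    (hτ2 : τ * τ = 1) (hanti : D * τ + τ * D = 0) (f : ℝ → ℝ)
    (hf : ContinuousOn f (spectrum ℝ D)) (hf2 : ContinuousOn f ((-·) '' (spectrum ℝ D))) :
    τ * cfc f D * τ = cfc (fun x => f (-x)) D := by
  have hτDτ : τ * D * τ = -D := by
    have h1 : D * τ = -(τ * D) := eq_neg_of_add_eq_zero_left hanti
    rw [mul_assoc, h1, mul_neg, ← mul_assoc, hτ2, one_mul]
  have hcont : Continuous (conjSAH τ hτ hτ2) := by
    show Continuous fun a : H →L[ℂ] H => τ * a * τ
    fun_prop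
  have hsa : IsSelfAdjoint (conjSAH τ hτ hτ2 D) := by
    show IsSelfAdjoint (τ * D * τ)
    rw [hτDτ]; exact hD.neg
  have := StarAlgHom.map_cfc (S := ℂ) (conjSAH τ hτ hτ2) f D hf hcont hD hsa
  have h2 : (conjSAH τ hτ hτ2) D = -D := hτDτ
  rw [h2] at this
  calc τ * cfc f D * τ = (conjSAH τ hτ hτ2) (cfc f D) := rfl
  _ = cfc f (-D) := this
  _ = cfc (fun x => f (-x)) D := (cfc_comp_neg f D hf2 hD).symm

/-- For a symmetry `τ` anticommuting with the self-adjoint `D` and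
`G = g(D) - τ h(D)` (with `g(x) = x/√(1+x²)`, `h(x) = 1/√(1+x²)`), one has
`Gτ + τG = -2 h(D)` and `(G - τ)² = 2(1 + h(D))`; since `h(D) ≥ 0` this gives
`(G - τ)² ≥ 2·1`, and in particular `G - τ` is invertible. -/
theorem stmt_5 {H : Type*} [NormedAddCommGroup H] [InnerProductSpace ℂ H] [CompleteSpace H]
    (D τ : H →L[ℂ] H) (hD : IsSelfAdjoint D) (hτ : IsSelfAdjoint τ)
    (hτ2 : τ * τ = 1) (hanti : D * τ + τ * D = 0)
    (G : H →L[ℂ] H)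
    (hG : G = cfc (fun x : ℝ => x / Real.sqrt (1 + x ^ 2)) D -
      τ * cfc (fun x : ℝ => 1 / Real.sqrt (1 + x ^ 2)) D) :
    G * τ + τ * G = -((2 : ℂ) • cfc (fun x : ℝ => 1 / Real.sqrt (1 + x ^ 2)) D) ∧
      (G - τ) ^ 2 = (2 : ℂ) • (1 + cfc (fun x : ℝ => 1 / Real.sqrt (1 + x ^ 2)) D) ∧
      (cfc (fun x : ℝ => 1 / Real.sqrt (1 + x ^ 2)) D).IsPositive ∧
      ((G - τ) ^ 2 - (2 : ℂ) • 1).IsPositive ∧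
      IsUnit (G - τ) := by
  set g : ℝ → ℝ := fun x => x / Real.sqrt (1 + x ^ 2) with hgdef
  set h : ℝ → ℝ := fun x => 1 / Real.sqrt (1 + x ^ 2) with hhdef
  have hsq : ∀ x : ℝ, (0:ℝ) < 1 + x ^ 2 := fun x => by positivity
  have hsqrt : ∀ x : ℝ, (0:ℝ) < Real.sqrt (1 + x ^ 2) := fun x =>
    Real.sqrt_pos.2 (hsq x)
  have hgc : Continuous g := by
    rw [hgdef]; fun_prop (disch := intro x; positivity)
  have hhc : Continuous h := by
    rw [hhdef]; fun_prop (disch := intro x; positivity)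
  have hgeven : (fun x => g (-x)) = fun x => -g x := by
    funext x; simp [hgdef, neg_div]
  have hheven : (fun x => h (-x)) = h := by
    funext x; simp [hhdef]
  set gD := cfc g D with hgD
  set hD' := cfc h D with hhD
  -- conjugation relations
  have c_g : τ * gD * τ = -gD := by
    rw [hgD, conj_cfc D τ hD hτ hτ2 hanti g hgc.continuousOn hgc.continuousOn,
      hgeven, cfc_neg]
  have c_h : τ * hD' * τ = hD' := by
    rw [hhD, conj_cfc D τ hD hτ hτ2 hanti h hhc.continuousOn hhc.continuousOn, hheven]
  have e1 : τ * hD' = hD' * τ := by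
    have := congrArg (· * τ) c_h
    simpa [mul_assoc, hτ2] using this
  have e2 : τ * gD = -(gD * τ) := by
    have := congrArg (· * τ) c_g
    simpa [mul_assoc, hτ2] using this
  have e3 : hD' * gD = gD * hD' := by
    rw [hgD, hhD, ← cfc_mul _ _ D hhc.continuousOn hgc.continuousOn,
      ← cfc_mul _ _ D hgc.continuousOn hhc.continuousOn]
    exact cfc_congr fun x _ => mul_comm _ _
  have e4 : gD * gD + hD' * hD' = 1 := by
    rw [hgD, hhD, ← cfc_mul _ _ D hgc.continuousOn hgc.continuousOn,
      ← cfc_mul _ _ D hhc.continuousOn hhc.continuousOn,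
      ← cfc_add (a := D) (fun x => g x * g x) (fun x => h x * h x) ((hgc.mul hgc).continuousOn) ((hhc.mul hhc).continuousOn),
      ← cfc_one (R := ℝ) D hD]
    refine cfc_congr fun x _ => ?_
    have hs : Real.sqrt (1 + x ^ 2) ^ 2 = 1 + x ^ 2 := Real.sq_sqrt (hsq x).le
    simp only [hgdef, hhdef, Pi.one_apply]; field_simp
    nlinarith [hs, hsqrt x]
  -- part 1
  have hGτ : G * τ = gD * τ - hD' := by
    rw [hG, sub_mul, c_h]
  have hτG : τ * G = -(gD * τ) - hD' := by
    rw [hG, mul_sub, e2, ← mul_assoc, hτ2, one_mul]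
  have part1 : G * τ + τ * G = -((2 : ℂ) • hD') := by
    rw [hGτ, hτG, two_smul]
    abel
  -- G * G = 1
  have hGG : G * G = 1 := by
    rw [hG]
    have t1 : (τ * hD') * (τ * hD') = hD' * hD' := by
      rw [← mul_assoc, c_h]
    have t2 : gD * (τ * hD') = (gD * hD') * τ := by
      rw [e1, ← mul_assoc, mul_assoc gD hD' τ]
    have t3 : (τ * hD') * gD = -((gD * hD') * τ) := by
      rw [e1, mul_assoc, e2, mul_neg, ← mul_assoc, e3, mul_assoc]
    rw [mul_sub, sub_mul, sub_mul, t1, t2, t3, ← e4]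
    abel
  -- part 2
  have part2 : (G - τ) ^ 2 = (2 : ℂ) • (1 + hD') := by
    have expand : (G - τ) ^ 2 = G * G - (G * τ + τ * G) + τ * τ := by
      rw [pow_two]; noncomm_ring
    rw [expand, hGG, hτ2, part1, smul_add, two_smul ℂ (1 : H →L[ℂ] H),
      two_smul ℂ hD']
    abel
  -- positivity of hD'
  have hpos : (0 : H →L[ℂ] H) ≤ hD' := by
    rw [hhD]
    exact cfc_nonneg fun x _ => by positivity
  have hposP : hD'.IsPositive := (ContinuousLinearMap.nonneg_iff_isPositive hD').1 hpos
  -- positivity of (G-τ)^2 - 2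
  have hdiff : (G - τ) ^ 2 - (2 : ℂ) • 1 = (2 : ℂ) • hD' := by
    rw [part2, smul_add, two_smul ℂ (1 : H →L[ℂ] H), two_smul ℂ hD']
    abel
  have hposP2 : ((G - τ) ^ 2 - (2 : ℂ) • 1).IsPositive := by
    rw [← ContinuousLinearMap.nonneg_iff_isPositive, hdiff, two_smul ℂ hD']
    exact add_nonneg hpos hpos
  -- invertibility
  have hunit1 : IsUnit (1 + hD') := by
    have hone : cfc (fun _ : ℝ => (1:ℝ)) D = 1 := by
      rw [cfc_const 1 D hD, map_one]
    rw [hhD, ← hone,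
      ← cfc_add (a := D) _ _ continuous_const.continuousOn hhc.continuousOn,
      isUnit_cfc_iff (fun x => 1 + h x) D ((continuous_const.add hhc).continuousOn)]
    intro x _
    have h1 : 0 < 1 / Real.sqrt (1 + x ^ 2) := by positivity
    have : (0:ℝ) < (1 : ℝ → ℝ) x + h x := by
      simp only [Pi.one_apply, hhdef]; positivity
    exact this.ne'
  have hunit2 : IsUnit ((G - τ) ^ 2) := by
    rw [part2, Algebra.smul_def]
    exact ((isUnit_of_invertible (2:ℂ)).map (algebraMap ℂ (H →L[ℂ] H))).mul hunit1
  have hunitG : IsUnit (G - τ) := by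
    obtain ⟨u, hu⟩ := hunit2
    have hcomm : Commute (G - τ) (↑u : H →L[ℂ] H) :=
      hu ▸ (Commute.refl (G - τ)).pow_right 2
    have hcomm' : Commute (G - τ) (↑u⁻¹ : H →L[ℂ] H) := hcomm.units_inv_right
    refine ⟨⟨G - τ, (G - τ) * ↑u⁻¹, ?_, ?_⟩, rfl⟩
    · rw [← mul_assoc, ← pow_two, ← hu, Units.mul_inv]
    · rw [mul_assoc, ← hcomm'.eq, ← mul_assoc, ← pow_two, ← hu, Units.mul_inv]
  exact ⟨part1, part2, hposP, hposP2, hunitG⟩
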